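/- Let κ be an infinite cardinal and let 𝒰 be a uniform ultrafilter over κ. If Ch(𝒰) = μ, then cf(μ) > ω. Consequently, the ultrafilter number 𝔲_κ has uncountable cofinality for every infinite cardinal κ. -/

import Mathlib

open Cardinal

/-- A base for an ultrafilter `U`: a collection of members of `U` such that every
member of `U` contains some element of the collection. -/
def IsUltraBase {α : Type*} (U : Ultrafilter α) (B : Set (Set α)) : Prop :=
  (∀ b ∈ B, b ∈ U) ∧ ∀ A ∈ U, ∃ b ∈ B, b ⊆ A

/-- The characteristic `Ch(U)` of an ultrafilter: the minimal cardinality of a base. -/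
noncomputable def ultraCh {α : Type*} (U : Ultrafilter α) : Cardinal :=
  sInf {c : Cardinal | ∃ B : Set (Set α), IsUltraBase U B ∧ #↥B = c}

/-- The ultrafilter number `𝔲_κ` (for `κ = #α`): the minimal size of a base for some
uniform ultrafilter over `α`. -/
noncomputable def uNumber (α : Type*) : Cardinal :=
  sInf {c : Cardinal | ∃ U : Ultrafilter α, (∀ A ∈ U, #↥A = #α) ∧
    ∃ B : Set (Set α), IsUltraBase U B ∧ #↥B = c}

section Aux

variable {α : Type*}

theorem exists_base (U : Ultrafilter α) : ∃ B : Set (Set α), IsUltraBase U B ∧ #↥B = ultraCh U := by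
  have hne : {c : Cardinal | ∃ B : Set (Set α), IsUltraBase U B ∧ #↥B = c}.Nonempty :=
    ⟨#↥{A : Set α | A ∈ U}, {A | A ∈ U}, ⟨fun b hb => hb, fun A hA => ⟨A, hA, subset_rfl⟩⟩, rfl⟩
  exact csInf_mem hne

theorem ultraCh_le (U : Ultrafilter α) {B : Set (Set α)} (hB : IsUltraBase U B) :
    ultraCh U ≤ #↥B :=
  csInf_le (OrderBot.bddBelow _) ⟨B, hB, rfl⟩

theorem exists_defeater (U : Ultrafilter α) {D : Set (Set α)} (h1 : ∀ d ∈ D, d ∈ U)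
    (h2 : #↥D < ultraCh U) : ∃ A ∈ U, ∀ d ∈ D, ¬ d ⊆ A := by
  by_contra hcon
  push_neg at hcon
  exact absurd (ultraCh_le U ⟨h1, hcon⟩) (not_le.2 h2)

/-- The heart of the argument: an ultrafilter admits no base which is an increasing countable
union of families each of size less than the characteristic. -/
theorem core_contradiction (U : Ultrafilter α) (F : ℕ → Set (Set α)) (hmono : Monotone F)
    (hcard : ∀ n, #↥(F n) < ultraCh U) (hmem : ∀ n, ∀ f ∈ F n, f ∈ U)
    (hbase : ∀ A ∈ U, ∃ n, ∃ f ∈ F n, f ⊆ A) : False := by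
  classical
  -- a choice function furnishing "defeaters"
  let pick : Set (Set α) → Set α := fun D =>
    if h : (∀ d ∈ D, d ∈ U) ∧ #↥D < ultraCh U then (exists_defeater U h.1 h.2).choose
    else Set.univ
  have pick_spec : ∀ (D : Set (Set α)), (∀ d ∈ D, d ∈ U) → #↥D < ultraCh U →
      pick D ∈ U ∧ ∀ d ∈ D, ¬ d ⊆ pick D := by
    intro D hD1 hD2
    have h : (∀ d ∈ D, d ∈ U) ∧ #↥D < ultraCh U := ⟨hD1, hD2⟩
    have hpd : pick D = (exists_defeater U h.1 h.2).choose := dif_pos h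
    rw [hpd]
    exact (exists_defeater U h.1 h.2).choose_spec
  let Dfun : Set α → ℕ → Set α := fun s n => pick ((fun f => f ∩ s) '' F n)
  let p : ℕ → Set α × Set α := fun n =>
    Nat.rec (⟨Set.univ, Set.univ \ Dfun Set.univ 0⟩)
      (fun n ih =>
        let bnew := ih.1 ∩ Dfun ih.1 n ∩ pick ((fun f => f \ ih.2) '' F (n + 1))
        ⟨bnew, ih.2 ∪ (bnew \ Dfun bnew (n + 1))⟩) n
  let b : ℕ → Set α := fun n => (p n).1
  let Sh : ℕ → Set α := fun n => (p n).2
  let D : ℕ → Set α := fun n => Dfun (b n) n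
  have hb0 : b 0 = Set.univ := rfl
  have hbsucc : ∀ n, b (n + 1) = b n ∩ D n ∩ pick ((fun f => f \ Sh n) '' F (n + 1)) :=
    fun n => rfl
  have hSh0 : Sh 0 = b 0 \ D 0 := by
    show Set.univ \ Dfun Set.univ 0 = b 0 \ D 0
    rfl
  have hShsucc : ∀ n, Sh (n + 1) = Sh n ∪ (b (n + 1) \ D (n + 1)) := fun n => rfl
  -- the defeater specification for `D n`
  have hDspec : ∀ n, b n ∈ U → D n ∈ U ∧ ∀ f ∈ F n, ¬ f ∩ b n ⊆ D n := by
    intro n hb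
    have h1 : ∀ d ∈ (fun f => f ∩ b n) '' F n, d ∈ U := by
      rintro d ⟨f, hf, rfl⟩
      exact Filter.inter_mem (hmem n f hf) hb
    have h2 : #↥((fun f => f ∩ b n) '' F n) < ultraCh U :=
      lt_of_le_of_lt mk_image_le (hcard n)
    obtain ⟨hmemD, hspec⟩ := pick_spec _ h1 h2
    exact ⟨hmemD, fun f hf => hspec _ ⟨f, hf, rfl⟩⟩
  -- joint invariant
  have hinv : ∀ n, b n ∈ U ∧ Sh n ∉ U := by
    intro n
    induction n with
    | zero =>
      have hbu : b 0 ∈ U := by rw [hb0]; exact Filter.univ_mem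
      refine ⟨hbu, ?_⟩
      have hD := (hDspec 0 hbu).1
      rw [hSh0]
      intro hSh
      have hc : (D 0)ᶜ ∈ U := Filter.mem_of_superset hSh (fun x hx => hx.2)
      exact (Ultrafilter.compl_notMem_iff.2 hD) hc
    | succ n ih =>
      obtain ⟨hbU, hShn⟩ := ih
      have hC1 : ∀ d ∈ (fun f => f \ Sh n) '' F (n + 1), d ∈ U := by
        rintro d ⟨f, hf, rfl⟩
        show f \ Sh n ∈ U
        rw [Set.diff_eq f (Sh n)]
        exact Filter.inter_mem (hmem _ f hf) (Ultrafilter.compl_mem_iff_notMem.2 hShn)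
      have hC2 : #↥((fun f => f \ Sh n) '' F (n + 1)) < ultraCh U :=
        lt_of_le_of_lt mk_image_le (hcard (n + 1))
      have hCmem := (pick_spec _ hC1 hC2).1
      have hbsuccU : b (n + 1) ∈ U := by
        rw [hbsucc n]
        exact Filter.inter_mem (Filter.inter_mem hbU (hDspec n hbU).1) hCmem
      refine ⟨hbsuccU, ?_⟩
      have hDsucc := (hDspec (n + 1) hbsuccU).1
      rw [hShsucc n]
      intro hmemU
      rcases Ultrafilter.union_mem_iff.1 hmemU with h | h
      · exact hShn h
      · exact (Ultrafilter.compl_notMem_iff.2 hDsucc)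
          (Filter.mem_of_superset h (fun x hx => hx.2))
  have hbU : ∀ n, b n ∈ U := fun n => (hinv n).1
  have hShU : ∀ n, Sh n ∉ U := fun n => (hinv n).2
  have hDdef : ∀ n, ∀ f ∈ F n, ¬ f ∩ b n ⊆ D n := fun n => (hDspec n (hbU n)).2
  have hbsub : ∀ n, b (n + 1) ⊆ b n ∩ D n := by
    intro n
    rw [hbsucc n]
    exact fun x hx => hx.1
  have hbanti : Antitone b :=
    antitone_nat_of_succ_le fun n => (hbsub n).trans Set.inter_subset_left
  have hCdef : ∀ n, ∀ f ∈ F (n + 1), ¬ f \ Sh n ⊆ b (n + 1) := by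
    intro n f hf hsub
    have hC1 : ∀ d ∈ (fun f => f \ Sh n) '' F (n + 1), d ∈ U := by
      rintro d ⟨g, hg, rfl⟩
      show g \ Sh n ∈ U
      rw [Set.diff_eq g (Sh n)]
      exact Filter.inter_mem (hmem _ g hg) (Ultrafilter.compl_mem_iff_notMem.2 (hShU n))
    have hC2 : #↥((fun f => f \ Sh n) '' F (n + 1)) < ultraCh U :=
      lt_of_le_of_lt mk_image_le (hcard (n + 1))
    have hCspec := (pick_spec _ hC1 hC2).2
    have hsubC : b (n + 1) ⊆ pick ((fun f => f \ Sh n) '' F (n + 1)) := by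
      rw [hbsucc n]
      exact Set.inter_subset_right
    exact hCspec _ ⟨f, hf, rfl⟩ (hsub.trans hsubC)
  have hshell : ∀ n, ∀ j ≤ n, b j \ D j ⊆ Sh n := by
    intro n
    induction n with
    | zero =>
      intro j hj
      rw [Nat.le_zero.1 hj, hSh0]
    | succ n ih =>
      intro j hj
      rcases eq_or_lt_of_le hj with h | h
      · rw [h, hShsucc n]
        exact Set.subset_union_right
      · exact (ih j (Nat.lt_succ_iff.1 h)).trans
          (by rw [hShsucc n]; exact Set.subset_union_left)
  -- the three-set cover
  have hcover : (Set.univ : Set α) ⊆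
      (⋃ n, (b n ∩ D n) \ b (n + 1)) ∪ (⋃ n, b n \ D n) ∪ (⋂ n, b n) := by
    intro x _
    by_cases hI : ∀ n, x ∈ b n
    · exact Or.inr (Set.mem_iInter.2 hI)
    · push_neg at hI
      have h0 : x ∈ b 0 := by rw [hb0]; trivial
      have hk := Nat.find_spec hI
      have hkpos : Nat.find hI ≠ 0 := by
        intro h
        rw [h] at hk
        exact hk h0
      obtain ⟨m, hm⟩ : ∃ m, Nat.find hI = m + 1 :=
        ⟨Nat.find hI - 1, (Nat.succ_pred_eq_of_pos (Nat.pos_of_ne_zero hkpos)).symm⟩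
      have hxm : x ∈ b m := by
        by_contra hxm
        exact Nat.find_min hI (by omega) hxm
      have hxnb : x ∉ b (m + 1) := by rw [← hm]; exact hk
      by_cases hxD : x ∈ D m
      · exact Or.inl (Or.inl (Set.mem_iUnion.2 ⟨m, ⟨⟨hxm, hxD⟩, hxnb⟩⟩))
      · exact Or.inl (Or.inr (Set.mem_iUnion.2 ⟨m, ⟨hxm, hxD⟩⟩))
  have hXRI : (⋃ n, (b n ∩ D n) \ b (n + 1)) ∪ (⋃ n, b n \ D n) ∪ (⋂ n, b n) ∈ U :=
    Filter.mem_of_superset Filter.univ_mem hcover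
  rcases Ultrafilter.union_mem_iff.1 hXRI with hXR | hI
  · rcases Ultrafilter.union_mem_iff.1 hXR with hX | hR
    · -- the diagonal part is in U
      obtain ⟨n, f, hfF, hfsub⟩ := hbase _ hX
      apply hDdef n f hfF
      rintro x ⟨hxf, hxb⟩
      obtain ⟨k, hk⟩ := Set.mem_iUnion.1 (hfsub hxf)
      obtain ⟨⟨hxbk, hxDk⟩, hxnb⟩ := hk
      rcases lt_or_ge k n with h | h
      · exact absurd (hbanti (Nat.succ_le_of_lt h) hxb) hxnb
      · rcases eq_or_lt_of_le h with h' | h'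
        · rw [h']; exact hxDk
        · exact ((hbsub n).trans Set.inter_subset_right)
            (hbanti (Nat.succ_le_of_lt h') hxbk)
    · -- the union of shells is in U
      obtain ⟨n, f, hfF, hfsub⟩ := hbase _ hR
      apply hCdef n f (hmono (Nat.le_succ n) hfF)
      rintro x ⟨hxf, hxSh⟩
      obtain ⟨k, hxbk, hxDk⟩ := Set.mem_iUnion.1 (hfsub hxf)
      rcases le_or_gt k n with h | h
      · exact absurd (hshell n k h ⟨hxbk, hxDk⟩) hxSh
      · exact hbanti h hxbk
    -- the intersection is in U
  · obtain ⟨n, f, hfF, hfsub⟩ := hbase _ hI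
    apply hDdef n f hfF
    rintro x ⟨hxf, _⟩
    have hxI : x ∈ b (n + 1) := Set.mem_iInter.1 (hfsub hxf) (n + 1)
    exact ((hbsub n) hxI).2

/-- Decomposition of a set of infinite cardinality `μ` with `cof (μ.ord) ≤ ℵ₀` into a
monotone countable union of strictly smaller pieces. -/
theorem exists_decomp {β : Type u} (Bs : Set β) (hinf : ℵ₀ ≤ #↥Bs)
    (hcof : (#↥Bs).ord.cof ≤ ℵ₀) :
    ∃ F : ℕ → Set β, Monotone F ∧ (∀ n, #↥(F n) < #↥Bs) ∧ (⋃ n, F n) = Bs := by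
  classical
  set μ := #↥Bs with hμ
  set o := μ.ord with ho
  have hcard_o : o.card = μ := Cardinal.card_ord μ
  have hone : o ≠ 0 := by
    intro h0
    rw [h0, Ordinal.card_zero] at hcard_o
    rw [← hcard_o] at hinf
    exact Cardinal.aleph0_ne_zero (le_antisymm hinf (Cardinal.zero_le _))
  have hmk : #o.ToType = #↥Bs := by rw [Cardinal.mk_toType, hcard_o]
  obtain ⟨φ⟩ := Cardinal.eq.1 hmk
  obtain ⟨S, hSunb, hScard⟩ := Order.exists_cof_eq o.ToType
  have hScount : S.Countable := by
    rw [← Cardinal.le_aleph0_iff_set_countable, hScard, Ordinal.cof_toType]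
    exact hcof
  have hSne : S.Nonempty := by
    have hne : Nonempty o.ToType := Ordinal.toType_nonempty_iff_ne_zero.2 hone
    obtain ⟨a⟩ := hne
    obtain ⟨x, hxS, _⟩ := hSunb a
    exact ⟨x, hxS⟩
  obtain ⟨e, he⟩ := hScount.exists_eq_range hSne
  have key : ∀ x : o.ToType, #↥(Set.Iic x) < μ := by
    intro x
    have h1 : #↥(Set.Iio x) < μ := by
      have h : #{y // y < x} = (@Ordinal.typein o.ToType (· < ·) isWellOrder_lt x).card :=
        @Ordinal.card_typein o.ToType _ isWellOrder_lt x
      have h2 : (@Ordinal.typein o.ToType (· < ·) isWellOrder_lt x : Ordinal) < o := by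
        conv_rhs => rw [← Ordinal.type_toType o]
        exact @Ordinal.typein_lt_type o.ToType (· < ·) isWellOrder_lt x
      have h3 : #↥(Set.Iio x) = #{y // y < x} := rfl
      rw [h3, h]
      exact Cardinal.lt_ord.1 (ho ▸ h2)
    have hsub : Set.Iic x ⊆ insert x (Set.Iio x) := by
      intro y hy
      rcases eq_or_lt_of_le (Set.mem_Iic.1 hy) with h | h
      · exact Or.inl h
      · exact Or.inr h
    calc #↥(Set.Iic x) ≤ #↥(insert x (Set.Iio x)) := mk_le_mk_of_subset hsub
      _ ≤ #↥(Set.Iio x) + 1 := Cardinal.mk_insert_le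
      _ < μ := Cardinal.add_lt_of_lt hinf h1 (lt_of_lt_of_le Cardinal.one_lt_aleph0 hinf)
  have hsets : ∀ n, #↥{y : o.ToType | ∃ k ≤ n, y ≤ e k} < μ := by
    intro n
    induction n with
    | zero =>
      have h : {y : o.ToType | ∃ k ≤ 0, y ≤ e k} = Set.Iic (e 0) := by
        ext y
        simp [Nat.le_zero]
      rw [h]
      exact key _
    | succ n ih =>
      have h : {y : o.ToType | ∃ k ≤ n + 1, y ≤ e k} ⊆
          {y : o.ToType | ∃ k ≤ n, y ≤ e k} ∪ Set.Iic (e (n + 1)) := by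
        rintro y ⟨k, hk, hy⟩
        rcases eq_or_lt_of_le hk with h | h
        · exact Or.inr (h ▸ hy)
        · exact Or.inl ⟨k, Nat.lt_succ_iff.1 h, hy⟩
      exact lt_of_le_of_lt ((mk_le_mk_of_subset h).trans (mk_union_le _ _))
        (Cardinal.add_lt_of_lt hinf ih (key _))
  refine ⟨fun n => (fun y => (φ y : β)) '' {y | ∃ k ≤ n, y ≤ e k}, ?_, ?_, ?_⟩
  · intro m n hmn
    apply Set.image_mono
    rintro y ⟨k, hk, hy⟩
    exact ⟨k, hk.trans hmn, hy⟩
  · intro n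
    exact lt_of_le_of_lt mk_image_le (hsets n)
  · ext c
    constructor
    · rintro ⟨_, ⟨n, rfl⟩, ⟨y, _, rfl⟩⟩
      exact (φ y).2
    · intro hc
      have hy := hSunb (φ.symm ⟨c, hc⟩)
      obtain ⟨s, hsS, hns⟩ := hy
      have hle : φ.symm ⟨c, hc⟩ ≤ s := hns
      rw [he] at hsS
      obtain ⟨k, rfl⟩ := hsS
      refine Set.mem_iUnion.2 ⟨k, ⟨φ.symm ⟨c, hc⟩, ⟨k, le_refl k, hle⟩, ?_⟩⟩
      show ((φ (φ.symm ⟨c, hc⟩)) : β) = c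
      rw [Equiv.apply_symm_apply]

theorem ultraCh_infinite {α : Type*} (hα : ℵ₀ ≤ #α) (U : Ultrafilter α)
    (huni : ∀ A ∈ U, #↥A = #α) : ℵ₀ ≤ ultraCh U := by
  by_contra hcon
  push_neg at hcon
  obtain ⟨B, hB, hBcard⟩ := exists_base U
  have hfin : B.Finite := by
    rw [← Cardinal.lt_aleph0_iff_set_finite, hBcard]
    exact hcon
  have hm : ⋂₀ B ∈ U := (Filter.sInter_mem hfin).2 fun b hb => hB.1 b hb
  obtain ⟨bs, hbsB, hbs⟩ := hB.2 _ hm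
  have hbsU : bs ∈ U := hB.1 bs hbsB
  have hbscard : #↥bs = #α := huni bs hbsU
  have hbsne : Nonempty ↥bs := by
    rw [← Cardinal.mk_ne_zero_iff, hbscard]
    exact ne_of_gt (lt_of_lt_of_le aleph0_pos hα)
  obtain ⟨x₀, hx₀⟩ := hbsne
  by_cases hs : ({x₀} : Set α) ∈ U
  · obtain ⟨b', hb'B, hb'⟩ := hB.2 _ hs
    have h1 : bs ⊆ {x₀} := hbs.trans ((Set.sInter_subset_of_mem hb'B).trans hb')
    have h2 : #↥bs ≤ 1 := by
      calc #↥bs ≤ #↥({x₀} : Set α) := mk_le_mk_of_subset h1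
        _ = 1 := mk_singleton x₀
    rw [hbscard] at h2
    exact absurd (hα.trans h2) (not_le.2 Cardinal.one_lt_aleph0)
  · have hsc : ({x₀}ᶜ : Set α) ∈ U := Ultrafilter.compl_mem_iff_notMem.2 hs
    obtain ⟨b', hb'B, hb'⟩ := hB.2 _ hsc
    have h1 : bs ⊆ {x₀}ᶜ := hbs.trans ((Set.sInter_subset_of_mem hb'B).trans hb')
    exact h1 hx₀ rfl

theorem ultraCh_cof {α : Type*} (hα : ℵ₀ ≤ #α) (U : Ultrafilter α)
    (huni : ∀ A ∈ U, #↥A = #α) : ℵ₀ < (ultraCh U).ord.cof := by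
  by_contra hcon
  push_neg at hcon
  obtain ⟨B, hB, hBcard⟩ := exists_base U
  have hinf : ℵ₀ ≤ #↥B := by rw [hBcard]; exact ultraCh_infinite hα U huni
  have hcof : (#↥B).ord.cof ≤ ℵ₀ := by rw [hBcard]; exact hcon
  obtain ⟨F, hmono, hcard, hcover⟩ := exists_decomp B hinf hcof
  refine core_contradiction U F hmono (fun n => by rw [← hBcard]; exact hcard n) ?_ ?_
  · intro n f hf
    exact hB.1 f (hcover ▸ Set.mem_iUnion.2 ⟨n, hf⟩)
  · intro A hA
    obtain ⟨f, hfB, hfs⟩ := hB.2 A hA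
    rw [← hcover] at hfB
    obtain ⟨n, hn⟩ := Set.mem_iUnion.1 hfB
    exact ⟨n, f, hn, hfs⟩

theorem exists_uniform {α : Type*} (hα : ℵ₀ ≤ #α) :
    ∃ U : Ultrafilter α, ∀ A ∈ U, #↥A = #α := by
  classical
  let L : Filter α :=
    { sets := {A : Set α | #↥(Aᶜ) < #α}
      univ_sets := by
        simp only [Set.mem_setOf_eq, Set.compl_univ, mk_emptyCollection]
        exact lt_of_lt_of_le aleph0_pos hα
      sets_of_superset := by
        intro A B hA hAB
        exact lt_of_le_of_lt (mk_le_mk_of_subset (Set.compl_subset_compl.2 hAB)) hA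
      inter_sets := by
        intro A B hA hB
        simp only [Set.mem_setOf_eq, Set.compl_inter]
        exact lt_of_le_of_lt (mk_union_le _ _) (Cardinal.add_lt_of_lt hα hA hB) }
  have hLsets : ∀ {A : Set α}, A ∈ L ↔ #↥(Aᶜ) < #α := Iff.rfl
  have hne : L.NeBot := by
    constructor
    intro hbot
    have hmem : (∅ : Set α) ∈ L := by rw [hbot]; exact Filter.mem_bot
    rw [hLsets] at hmem
    simp only [Set.compl_empty, mk_univ] at hmem
    exact lt_irrefl _ hmem
  refine ⟨Ultrafilter.of L, ?_⟩
  intro A hA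
  refine le_antisymm (Cardinal.mk_set_le A) ?_
  by_contra hlt
  push_neg at hlt
  have hAc : Aᶜ ∈ L := by rw [hLsets, compl_compl]; exact hlt
  have hmem : Aᶜ ∈ Ultrafilter.of L := Ultrafilter.of_le L hAc
  exact (Ultrafilter.compl_notMem_iff.2 hA) hmem

end Aux

/-- For an infinite cardinal `κ = #α` and a uniform ultrafilter `U` over `κ`,
if `Ch(U) = μ` then `cf(μ) > ω`; consequently `𝔲_κ` has uncountable cofinality. -/
theorem stmt1 {α : Type*} (hα : ℵ₀ ≤ #α) :
    (∀ U : Ultrafilter α, (∀ A ∈ U, #↥A = #α) →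
      ∀ μ : Cardinal, ultraCh U = μ → ℵ₀ < μ.ord.cof) ∧
    ℵ₀ < (uNumber α).ord.cof := by
  constructor
  · intro U huni μ hμ
    rw [← hμ]
    exact ultraCh_cof hα U huni
  · obtain ⟨U₀, huni₀⟩ := exists_uniform hα
    have hne : {c : Cardinal | ∃ U : Ultrafilter α, (∀ A ∈ U, #↥A = #α) ∧
        ∃ B : Set (Set α), IsUltraBase U B ∧ #↥B = c}.Nonempty := by
      obtain ⟨B, hB, hBc⟩ := exists_base U₀
      exact ⟨ultraCh U₀, U₀, huni₀, B, hB, hBc⟩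
    obtain ⟨U₁, huni₁, B₁, hB₁, hB₁c⟩ := csInf_mem hne
    have h1 : ultraCh U₁ ≤ uNumber α :=
      calc ultraCh U₁ ≤ #↥B₁ := ultraCh_le U₁ hB₁
        _ = uNumber α := hB₁c
    have h2 : uNumber α ≤ ultraCh U₁ := by
      obtain ⟨B, hB, hBc⟩ := exists_base U₁
      exact csInf_le (OrderBot.bddBelow _) ⟨U₁, huni₁, B, hB, hBc⟩
    have heq : uNumber α = ultraCh U₁ := le_antisymm h2 h1
    rw [heq]
    exact ultraCh_cof hα U₁ huni₁
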